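/- Let 𝔤 be a finite-dimensional Lie algebra over a field K generated by a set A. Then for any k ∈ ℕ, the union T_{≤k}(A) of towers of length at most k spans a vector subspace of 𝔤 of dimension at least min{dim 𝔤, k}. -/
import Mathlib


variable {K : Type*} [Field K] {L : Type*} [LieRing L] [LieAlgebra K L]

/-- The tower `T_k(A)`: `T_0 = {0}`, `T_1 = A`, `T_k = [A, T_{k-1}] ∪ [T_{k-1}, A]`. -/
def tower (A : Set L) : ℕ → Set L
  | 0 => {0}
  | 1 => A
  | (k + 2) =>
      Set.image2 (fun a t => ⁅a, t⁆) A (tower A (k + 1)) ∪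
        Set.image2 (fun t a => ⁅t, a⁆) (tower A (k + 1)) A

lemma bracket_mem_span (A : Set L) (k : ℕ) {a : L} (ha : a ∈ A) {x : L}
    (hx : x ∈ Submodule.span K (⋃ j ∈ Finset.range (k + 1), tower A j)) :
    ⁅a, x⁆ ∈ Submodule.span K (⋃ j ∈ Finset.range (k + 1 + 1), tower A j) := by
  induction hx using Submodule.span_induction with
  | mem t ht =>
      simp only [Set.mem_iUnion, Finset.mem_range] at ht
      obtain ⟨j, hj, htj⟩ := ht
      apply Submodule.subset_span
      simp only [Set.mem_iUnion, Finset.mem_range]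
      match j with
      | 0 =>
        refine ⟨0, by omega, ?_⟩
        simp only [tower, Set.mem_singleton_iff] at htj ⊢
        rw [htj, lie_zero]
      | m + 1 =>
        refine ⟨m + 2, by omega, ?_⟩
        show ⁅a, t⁆ ∈ tower A (m + 2)
        exact Or.inl (Set.mem_image2_of_mem ha htj)
  | zero => simp
  | add x y _ _ hx hy => rw [lie_add]; exact add_mem hx hy
  | smul c x _ hx => rw [lie_smul]; exact Submodule.smul_mem _ _ hx

/-- If `A` generates a finite-dimensional Lie algebra `𝔤`, then `T_{≤k}(A)` spans a subspace
of dimension at least `min (dim 𝔤) k`. -/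
theorem stmt2 [FiniteDimensional K L] (A : Set L)
    (hA : LieSubalgebra.lieSpan K L A = ⊤) (k : ℕ) :
    min (Module.finrank K L) k ≤
      Module.finrank K ↥(Submodule.span K (⋃ j ∈ Finset.range (k + 1), tower A j)) := by
  induction k with
  | zero => simp
  | succ k ih =>
    let W : ℕ → Submodule K L := fun n => Submodule.span K (⋃ j ∈ Finset.range (n+1), tower A j)
    show min (Module.finrank K L) (k+1) ≤ Module.finrank K ↥(W (k+1))
    have ih' : min (Module.finrank K L) k ≤ Module.finrank K ↥(W k) := ih
    have hmono : W k ≤ W (k+1) := Submodule.span_mono (by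
      intro x hx
      simp only [Set.mem_iUnion, Finset.mem_range] at hx ⊢
      obtain ⟨j, hj, h⟩ := hx; exact ⟨j, by omega, h⟩)
    by_cases heq : W (k+1) = W k
    · have hA1 : A ⊆ (W k : Set L) := by
        rw [← heq]
        intro a ha
        apply Submodule.subset_span
        simp only [Set.mem_iUnion, Finset.mem_range]
        exact ⟨1, by omega, ha⟩
      have hbr : ∀ a ∈ A, ∀ x ∈ W k, ⁅a, x⁆ ∈ W k := by
        intro a ha x hx
        rw [← heq]
        exact bracket_mem_span A k ha hx
      let C : LieSubalgebra K L :=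
        { carrier := {x : L | ∀ y ∈ W k, ⁅x, y⁆ ∈ W k}
          add_mem' := fun hx hy y hyW => by
            rw [add_lie]; exact add_mem (hx y hyW) (hy y hyW)
          zero_mem' := fun y hyW => by rw [zero_lie]; exact zero_mem _
          smul_mem' := fun c x hx y hyW => by
            rw [smul_lie]; exact Submodule.smul_mem _ _ (hx y hyW)
          lie_mem' := fun {x y} hx hy z hzW => by
            rw [lie_lie]; exact sub_mem (hx _ (hy z hzW)) (hy _ (hx z hzW)) }
      have hAC : A ⊆ (C : Set L) := fun a ha => hbr a ha
      have hC : ∀ x : L, ∀ y ∈ W k, ⁅x, y⁆ ∈ W k := by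
        intro x
        have hx : x ∈ C := by
          have h := (LieSubalgebra.lieSpan_le (K := C)).mpr hAC
          rw [hA] at h
          exact h (LieSubalgebra.mem_top x)
        exact hx
      let B : LieSubalgebra K L := { W k with lie_mem' := fun {x y} _ hy => hC x y hy }
      have hB : LieSubalgebra.lieSpan K L A ≤ B := LieSubalgebra.lieSpan_le.mpr hA1
      rw [hA] at hB
      have htop : W (k+1) = ⊤ := by
        rw [heq, eq_top_iff]
        intro x _
        exact hB (LieSubalgebra.mem_top x)
      rw [htop, finrank_top]
      exact min_le_left _ _
    · have hlt : W k < W (k+1) := lt_of_le_of_ne hmono (Ne.symm heq)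
      have h1 := Submodule.finrank_lt_finrank_of_lt hlt
      omega
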